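/- Let G be a finite simple graph and H a finite simple graph admitting a barbell partition, sharing exactly one common vertex v. Then the vertex sum K = G ⊕_v H admits a barbell partition. -/

import Mathlib

open SimpleGraph

/-- A barbell partition of a graph `G`: a partition of the vertex set into
`R`, `W1`, `W2` with `W1, W2` nonempty, no edges between `W1` and `W2`, and
every vertex of `R` has a number of neighbors in each `Wi` different from 1. -/
def IsBarbellPartition {V : Type*} (G : SimpleGraph V) (R W1 W2 : Set V) : Prop :=
  R ∪ W1 ∪ W2 = Set.univ ∧ Disjoint R W1 ∧ Disjoint R W2 ∧ Disjoint W1 W2 ∧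
  W1.Nonempty ∧ W2.Nonempty ∧
  (∀ w1 ∈ W1, ∀ w2 ∈ W2, ¬ G.Adj w1 w2) ∧
  (∀ v ∈ R, (G.neighborSet v ∩ W1).ncard ≠ 1 ∧ (G.neighborSet v ∩ W2).ncard ≠ 1)

/-- `G` admits a barbell partition. -/
def HasBarbellPartition {V : Type*} (G : SimpleGraph V) : Prop :=
  ∃ R W1 W2 : Set V, IsBarbellPartition G R W1 W2

/-- A fort of `G`: a nonempty vertex set `F` such that no vertex outside `F`
has exactly one neighbor in `F`. -/
def IsFort {V : Type*} (G : SimpleGraph V) (F : Set V) : Prop :=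
  F.Nonempty ∧ ∀ v ∉ F, (G.neighborSet v ∩ F).ncard ≠ 1

/-- The vertex sum `G ⊕_v H`: disjoint copies of `G` and `H` with the vertex
`a` of `G` identified with the vertex `b` of `H` (represented by `Sum.inl a`). -/
def vertexSum {α β : Type*} (G : SimpleGraph α) (H : SimpleGraph β) (a : α) (b : β) :
    SimpleGraph (α ⊕ {y : β // y ≠ b}) where
  Adj x y :=
    match x, y with
    | Sum.inl u, Sum.inl w => G.Adj u w
    | Sum.inl u, Sum.inr w => u = a ∧ H.Adj b w.1
    | Sum.inr u, Sum.inl w => w = a ∧ H.Adj u.1 b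
    | Sum.inr u, Sum.inr w => H.Adj u.1 w.1
  symm := by
    constructor
    rintro (u | u) (w | w) h
    · exact h.symm
    · exact ⟨h.1, h.2.symm⟩
    · exact ⟨h.1, h.2.symm⟩
    · exact h.symm
  loopless := by
    constructor
    rintro (u | u) h
    · exact G.irrefl h
    · exact H.irrefl h


open Classical in
/-- Map from `β` into the vertex set of the vertex sum. -/
noncomputable def vsf {α β : Type*} (a : α) (b : β) (y : β) : α ⊕ {y : β // y ≠ b} :=
  if h : y = b then Sum.inl a else Sum.inr ⟨y, h⟩

lemma vsf_injective {α β : Type*} (a : α) (b : β) : Function.Injective (vsf a b) := by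
  intro x y h
  unfold vsf at h
  split_ifs at h with h1 h2 h2 <;> simp_all

lemma inl_mem_vsf_image {α β : Type*} {a : α} {b : β} {S : Set β} {w : α} :
    Sum.inl w ∈ vsf a b '' S ↔ b ∈ S ∧ a = w := by
  constructor
  · rintro ⟨y, hy, heq⟩
    unfold vsf at heq
    by_cases h1 : y = b
    · subst h1; rw [dif_pos rfl] at heq; cases heq; exact ⟨hy, rfl⟩
    · rw [dif_neg h1] at heq; exact absurd heq (by simp)
  · rintro ⟨hb, rfl⟩
    exact ⟨b, hb, by simp [vsf]⟩

lemma inr_mem_vsf_image {α β : Type*} {a : α} {b : β} {S : Set β} {w : {y : β // y ≠ b}} :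
    Sum.inr w ∈ vsf a b '' S ↔ w.1 ∈ S := by
  constructor
  · rintro ⟨y, hy, heq⟩
    unfold vsf at heq
    by_cases h1 : y = b
    · subst h1; rw [dif_pos rfl] at heq; exact absurd heq (by simp)
    · rw [dif_neg h1] at heq; cases heq; exact hy
  · intro hw
    exact ⟨w.1, hw, by simp [vsf, w.2]⟩

section Adj

variable {α β : Type*} (G : SimpleGraph α) (H : SimpleGraph β) (a : α) (b : β)

@[simp] lemma vertexSum_adj_inl_inl (u w : α) :
    (vertexSum G H a b).Adj (Sum.inl u) (Sum.inl w) ↔ G.Adj u w := Iff.rfl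

@[simp] lemma vertexSum_adj_inl_inr (u : α) (w : {y : β // y ≠ b}) :
    (vertexSum G H a b).Adj (Sum.inl u) (Sum.inr w) ↔ u = a ∧ H.Adj b w.1 := Iff.rfl

@[simp] lemma vertexSum_adj_inr_inl (u : {y : β // y ≠ b}) (w : α) :
    (vertexSum G H a b).Adj (Sum.inr u) (Sum.inl w) ↔ w = a ∧ H.Adj u.1 b := Iff.rfl

@[simp] lemma vertexSum_adj_inr_inr (u w : {y : β // y ≠ b}) :
    (vertexSum G H a b).Adj (Sum.inr u) (Sum.inr w) ↔ H.Adj u.1 w.1 := Iff.rfl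

/-- Neighbors of an `inr` vertex inside a lifted set. -/
lemma nbr_inter_inr {S : Set β} {T : Set (α ⊕ {y : β // y ≠ b})}
    (hinl : Sum.inl a ∈ T ↔ b ∈ S) (hinr : ∀ w : {y : β // y ≠ b}, Sum.inr w ∈ T ↔ w.1 ∈ S)
    (r : {y : β // y ≠ b}) :
    (vertexSum G H a b).neighborSet (Sum.inr r) ∩ T = vsf a b '' (H.neighborSet r.1 ∩ S) := by
  ext x
  rcases x with u | w
  · rw [Set.mem_inter_iff, mem_neighborSet, vertexSum_adj_inr_inl, inl_mem_vsf_image]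
    constructor
    · rintro ⟨⟨rfl, hadj⟩, hT⟩
      exact ⟨⟨hadj, hinl.mp hT⟩, rfl⟩
    · rintro ⟨⟨hadj, hbS⟩, rfl⟩
      exact ⟨⟨rfl, hadj⟩, hinl.mpr hbS⟩
  · rw [Set.mem_inter_iff, mem_neighborSet, vertexSum_adj_inr_inr, inr_mem_vsf_image,
      hinr, Set.mem_inter_iff, mem_neighborSet]

/-- Neighbors of the summing vertex `inl a` inside a lifted set containing no `inl`. -/
lemma nbr_inter_inla {S : Set β} {T : Set (α ⊕ {y : β // y ≠ b})}
    (hinl : ∀ u : α, Sum.inl u ∉ T) (hinr : ∀ w : {y : β // y ≠ b}, Sum.inr w ∈ T ↔ w.1 ∈ S) :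
    (vertexSum G H a b).neighborSet (Sum.inl a) ∩ T = vsf a b '' (H.neighborSet b ∩ S) := by
  ext x
  rcases x with u | w
  · simp only [Set.mem_inter_iff, inl_mem_vsf_image]
    constructor
    · rintro ⟨-, hT⟩; exact absurd hT (hinl u)
    · rintro ⟨⟨hadj, -⟩, -⟩; exact absurd hadj H.irrefl
  · rw [Set.mem_inter_iff, mem_neighborSet, vertexSum_adj_inl_inr, inr_mem_vsf_image,
      hinr, Set.mem_inter_iff, mem_neighborSet]
    tauto

/-- A non-summing `inl` vertex has no neighbors in a lifted set containing no `inl`. -/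
lemma nbr_inter_inl {T : Set (α ⊕ {y : β // y ≠ b})}
    (hinl : ∀ u : α, Sum.inl u ∉ T) {u : α} (hu : u ≠ a) :
    (vertexSum G H a b).neighborSet (Sum.inl u) ∩ T = ∅ := by
  ext x
  rcases x with v | w
  · simp only [Set.mem_inter_iff, Set.mem_empty_iff_false, iff_false]
    rintro ⟨-, hT⟩; exact hinl v hT
  · simp only [Set.mem_inter_iff, mem_neighborSet, vertexSum_adj_inl_inr,
      Set.mem_empty_iff_false, iff_false]
    rintro ⟨⟨rfl, -⟩, -⟩; exact hu rfl

end Adj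

lemma swap_barbell {V : Type*} {G : SimpleGraph V} {R W1 W2 : Set V}
    (h : IsBarbellPartition G R W1 W2) : IsBarbellPartition G R W2 W1 := by
  obtain ⟨huniv, h1, h2, h12, hn1, hn2, hno, hdeg⟩ := h
  refine ⟨?_, h2, h1, h12.symm, hn2, hn1, ?_, fun v hv => (hdeg v hv).symm⟩
  · rw [← huniv]; ext x; simp [Set.mem_union]; tauto
  · exact fun w2 hw2 w1 hw1 hadj => hno w1 hw1 w2 hw2 hadj.symm

/-- Case `b ∈ R`. -/
lemma aux_memR {α β : Type*} (G : SimpleGraph α) (H : SimpleGraph β) (a : α) (b : β)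
    {R W1 W2 : Set β} (hP : IsBarbellPartition H R W1 W2) (hb : b ∈ R) :
    HasBarbellPartition (vertexSum G H a b) := by
  obtain ⟨huniv, hRW1, hRW2, hW12, hW1ne, hW2ne, hno, hdeg⟩ := hP
  have hbW1 : b ∉ W1 := fun h => hRW1.ne_of_mem hb h rfl
  have hbW2 : b ∉ W2 := fun h => hRW2.ne_of_mem hb h rfl
  have keyW1 := nbr_inter_inr G H a b (S := W1)
    (T := {x | match x with | Sum.inl _ => False | Sum.inr w => w.1 ∈ W1})
    (by simpa using hbW1) (fun w => Iff.rfl)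
  have keyW2 := nbr_inter_inr G H a b (S := W2)
    (T := {x | match x with | Sum.inl _ => False | Sum.inr w => w.1 ∈ W2})
    (by simpa using hbW2) (fun w => Iff.rfl)
  refine ⟨{x | match x with | Sum.inl _ => True | Sum.inr w => w.1 ∈ R},
          {x | match x with | Sum.inl _ => False | Sum.inr w => w.1 ∈ W1},
          {x | match x with | Sum.inl _ => False | Sum.inr w => w.1 ∈ W2},
          ?_, ?_, ?_, ?_, ?_, ?_, ?_, ?_⟩
  · ext x
    rcases x with u | w
    · simp
    · have : w.1 ∈ R ∪ W1 ∪ W2 := by rw [huniv]; trivial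
      simpa [Set.mem_union] using this
  · rw [Set.disjoint_left]; rintro (u | w) hx hy
    · exact hy
    · exact hRW1.ne_of_mem hx hy rfl
  · rw [Set.disjoint_left]; rintro (u | w) hx hy
    · exact hy
    · exact hRW2.ne_of_mem hx hy rfl
  · rw [Set.disjoint_left]; rintro (u | w) hx hy
    · exact hx
    · exact hW12.ne_of_mem hx hy rfl
  · obtain ⟨w, hw⟩ := hW1ne
    exact ⟨Sum.inr ⟨w, fun h => hbW1 (h ▸ hw)⟩, hw⟩
  · obtain ⟨w, hw⟩ := hW2ne
    exact ⟨Sum.inr ⟨w, fun h => hbW2 (h ▸ hw)⟩, hw⟩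
  · rintro (u | w1) hx (u' | w2) hy hadj
    · exact hx
    · exact hx
    · exact hy
    · exact hno w1.1 hx w2.1 hy hadj
  · rintro (u | w) hx
    · by_cases hua : u = a
      · rw [hua]
        rw [nbr_inter_inla G H a b (S := W1)
              (T := {x | match x with | Sum.inl _ => False | Sum.inr w => w.1 ∈ W1})
              (fun u h => h) (fun w => Iff.rfl),
            nbr_inter_inla G H a b (S := W2)
              (T := {x | match x with | Sum.inl _ => False | Sum.inr w => w.1 ∈ W2})
              (fun u h => h) (fun w => Iff.rfl),
            Set.ncard_image_of_injective _ (vsf_injective a b),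
            Set.ncard_image_of_injective _ (vsf_injective a b)]
        exact hdeg b hb
      · rw [nbr_inter_inl G H a b
              (T := {x | match x with | Sum.inl _ => False | Sum.inr w => w.1 ∈ W1})
              (fun u h => h) hua,
            nbr_inter_inl G H a b
              (T := {x | match x with | Sum.inl _ => False | Sum.inr w => w.1 ∈ W2})
              (fun u h => h) hua]
        simp
    · rw [keyW1 w, keyW2 w, Set.ncard_image_of_injective _ (vsf_injective a b),
          Set.ncard_image_of_injective _ (vsf_injective a b)]
      exact hdeg w.1 hx

/-- Case `b ∈ W1`. -/
lemma aux_memW1 {α β : Type*} (G : SimpleGraph α) (H : SimpleGraph β) (a : α) (b : β)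
    {R W1 W2 : Set β} (hP : IsBarbellPartition H R W1 W2) (hb : b ∈ W1) :
    HasBarbellPartition (vertexSum G H a b) := by
  obtain ⟨huniv, hRW1, hRW2, hW12, hW1ne, hW2ne, hno, hdeg⟩ := hP
  have hbR : b ∉ R := fun h => hRW1.ne_of_mem h hb rfl
  have hbW2 : b ∉ W2 := fun h => hW12.ne_of_mem hb h rfl
  have keyW1 := nbr_inter_inr G H a b (S := W1)
    (T := {x | match x with | Sum.inl _ => True | Sum.inr w => w.1 ∈ W1})
    (by simpa using hb) (fun w => Iff.rfl)
  have keyW2 := nbr_inter_inr G H a b (S := W2)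
    (T := {x | match x with | Sum.inl _ => False | Sum.inr w => w.1 ∈ W2})
    (by simpa using hbW2) (fun w => Iff.rfl)
  refine ⟨{x | match x with | Sum.inl _ => False | Sum.inr w => w.1 ∈ R},
          {x | match x with | Sum.inl _ => True | Sum.inr w => w.1 ∈ W1},
          {x | match x with | Sum.inl _ => False | Sum.inr w => w.1 ∈ W2},
          ?_, ?_, ?_, ?_, ?_, ?_, ?_, ?_⟩
  · ext x
    rcases x with u | w
    · simp
    · have : w.1 ∈ R ∪ W1 ∪ W2 := by rw [huniv]; trivial
      simpa [Set.mem_union] using this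
  · rw [Set.disjoint_left]; rintro (u | w) hx hy
    · exact hx
    · exact hRW1.ne_of_mem hx hy rfl
  · rw [Set.disjoint_left]; rintro (u | w) hx hy
    · exact hx
    · exact hRW2.ne_of_mem hx hy rfl
  · rw [Set.disjoint_left]; rintro (u | w) hx hy
    · exact hy
    · exact hW12.ne_of_mem hx hy rfl
  · exact ⟨Sum.inl a, trivial⟩
  · obtain ⟨w, hw⟩ := hW2ne
    exact ⟨Sum.inr ⟨w, fun h => hbW2 (h ▸ hw)⟩, hw⟩
  · rintro (u | w1) hx (u' | w2) hy hadj
    · exact hy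
    · exact hno b hb w2.1 hy hadj.2
    · exact hy
    · exact hno w1.1 hx w2.1 hy hadj
  · rintro (u | w) hx
    · exact absurd hx (by simp)
    · rw [keyW1 w, keyW2 w, Set.ncard_image_of_injective _ (vsf_injective a b),
          Set.ncard_image_of_injective _ (vsf_injective a b)]
      exact hdeg w.1 hx

/-- If `H` admits a barbell partition then any vertex sum `G ⊕_v H` admits a
barbell partition. -/
theorem vertexSum_hasBarbellPartition {α β : Type*} [Fintype α] [Fintype β]
    (G : SimpleGraph α) (H : SimpleGraph β) (a : α) (b : β)
    (hH : HasBarbellPartition H) :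
    HasBarbellPartition (vertexSum G H a b) := by
  obtain ⟨R, W1, W2, hP⟩ := hH
  have hbmem : b ∈ R ∪ W1 ∪ W2 := by rw [hP.1]; trivial
  rcases hbmem with (hb | hb) | hb
  · exact aux_memR G H a b hP hb
  · exact aux_memW1 G H a b hP hb
  · exact aux_memW1 G H a b (swap_barbell hP) hb
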